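/- Fix γ > 0, 0 < t ≤ T, and define φ(s,x) = (x+e)·exp(γ·√(2 s·log(x+e)) + (γ/2)·∫ₜˢ (γ + √(2/r)) dr) for (s,x) ∈ [t,T]×[0,∞). Then for all (s,x) ∈ [t,T]×[0,∞), the partial derivatives satisfy φ_x(s,x) > 0, φ_{xx}(s,x) > 0, φ_s(s,x) > 0, and moreover −(γ²/2)·φ_x(s,x)²/φ_{xx}(s,x) + φ_s(s,x) ≥ 0. -/

import Mathlib

/-- φ(s,x) = (x+e)·exp(γ·√(2 s·log(x+e)) + (γ/2)·∫ₜˢ (γ + √(2/r)) dr), where the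
integral equals γ(s−t) + 2√2(√s − √t). -/
noncomputable def phi (γ t s x : ℝ) : ℝ :=
  (x + Real.exp 1) *
    Real.exp (γ * Real.sqrt (2 * s * Real.log (x + Real.exp 1)) +
      γ / 2 * (γ * (s - t) + 2 * Real.sqrt 2 * (Real.sqrt s - Real.sqrt t)))

/-- The first-order partial derivative of φ in x. -/
noncomputable def phix (γ t s x : ℝ) : ℝ :=
  phi γ t s x * ((γ * Real.sqrt s + Real.sqrt (2 * Real.log (x + Real.exp 1))) /
    ((x + Real.exp 1) * Real.sqrt (2 * Real.log (x + Real.exp 1))))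

/-- The second-order partial derivative of φ in x. -/
noncomputable def phixx (γ t s x : ℝ) : ℝ :=
  phi γ t s x * (γ * Real.sqrt s *
      (2 * Real.log (x + Real.exp 1) + γ * Real.sqrt (2 * s * Real.log (x + Real.exp 1)) - 1) /
    ((x + Real.exp 1) ^ 2 * Real.sqrt (2 * Real.log (x + Real.exp 1)) ^ 3))

/-- The partial derivative of φ in s. -/
noncomputable def phis (γ t s x : ℝ) : ℝ :=
  γ * phi γ t s x / 2 *
    ((Real.sqrt (2 * Real.log (x + Real.exp 1)) + Real.sqrt 2) / Real.sqrt s + γ)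

lemma phi_aux (γ P E L a u : ℝ) (hγ : 0 < γ) (hP : 0 < P) (hE : 0 < E) (hL : 1 ≤ L)
    (hu : 0 < u) (ha2 : Real.sqrt 2 ≤ a) (hasq : a ^ 2 = 2 * L) :
    0 < P * ((γ * u + a) / (E * a)) ∧
    0 < P * (γ * u * (2 * L + γ * (u * a) - 1) / (E ^ 2 * a ^ 3)) ∧
    0 < γ * P / 2 * ((a + Real.sqrt 2) / u + γ) ∧
    0 ≤ -(γ ^ 2 / 2) * (P * ((γ * u + a) / (E * a))) ^ 2 /
        (P * (γ * u * (2 * L + γ * (u * a) - 1) / (E ^ 2 * a ^ 3))) +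
        γ * P / 2 * ((a + Real.sqrt 2) / u + γ) := by
  have h22 : Real.sqrt 2 * Real.sqrt 2 = 2 := Real.mul_self_sqrt (by norm_num)
  have hs2 : (1:ℝ) < Real.sqrt 2 := by nlinarith [Real.sqrt_nonneg 2]
  have ha1 : 1 < a := lt_of_lt_of_le hs2 ha2
  have ha0 : 0 < a := by linarith
  have hL0 : (0:ℝ) < L := by linarith
  have hnum : 0 < 2 * L + γ * (u * a) - 1 := by
    nlinarith [mul_pos (mul_pos hγ hu) ha0]
  have h1 : 0 < P * ((γ * u + a) / (E * a)) := by positivity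
  have h2 : 0 < P * (γ * u * (2 * L + γ * (u * a) - 1) / (E ^ 2 * a ^ 3)) := by
    exact mul_pos hP (div_pos (by positivity) (by positivity))
  have h3 : 0 < γ * P / 2 * ((a + Real.sqrt 2) / u + γ) := by positivity
  refine ⟨h1, h2, h3, ?_⟩
  have core : a * (γ * u + a) ^ 2 ≤
      (a + Real.sqrt 2 + γ * u) * (a ^ 2 + γ * u * a - 1) := by
    nlinarith [mul_nonneg (by linarith : (0:ℝ) ≤ a - Real.sqrt 2)
        (by nlinarith : (0:ℝ) ≤ Real.sqrt 2 * a + 1),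
      mul_nonneg (mul_nonneg hγ.le hu.le) (by nlinarith : (0:ℝ) ≤ Real.sqrt 2 * a - 1)]
  have h4 : γ ^ 2 / 2 * (P * ((γ * u + a) / (E * a))) ^ 2 /
      (P * (γ * u * (2 * L + γ * (u * a) - 1) / (E ^ 2 * a ^ 3))) ≤
      γ * P / 2 * ((a + Real.sqrt 2) / u + γ) := by
    rw [div_le_iff₀ h2, ← hasq]
    have hEne : E ≠ 0 := ne_of_gt hE
    have hane : a ≠ 0 := ne_of_gt ha0
    have hune : u ≠ 0 := ne_of_gt hu
    rw [div_add' _ _ _ hune]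
    field_simp
    nlinarith [mul_le_mul_of_nonneg_left core
        (by positivity : (0:ℝ) ≤ γ * u * P ^ 2 * E ^ 2 * a ^ 2 / 2),
      mul_pos hP hP, mul_pos hu ha0]
  have heq : -(γ ^ 2 / 2) * (P * ((γ * u + a) / (E * a))) ^ 2 /
      (P * (γ * u * (2 * L + γ * (u * a) - 1) / (E ^ 2 * a ^ 3))) =
      -(γ ^ 2 / 2 * (P * ((γ * u + a) / (E * a))) ^ 2 /
      (P * (γ * u * (2 * L + γ * (u * a) - 1) / (E ^ 2 * a ^ 3)))) := by ring
  rw [heq]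
  linarith

/-- For `γ > 0`, `0 < t ≤ T`, and `(s,x) ∈ [t,T]×[0,∞)`: `φ_x > 0`, `φ_{xx} > 0`,
`φ_s > 0` and `−(γ²/2)·φ_x²/φ_{xx} + φ_s ≥ 0`. -/
theorem phi_partials_pos_and_key_ineq (γ t T s x : ℝ) (hγ : 0 < γ) (ht : 0 < t)
    (htT : t ≤ T) (hs : s ∈ Set.Icc t T) (hx : 0 ≤ x) :
    0 < phix γ t s x ∧ 0 < phixx γ t s x ∧ 0 < phis γ t s x ∧
      0 ≤ -(γ ^ 2 / 2) * (phix γ t s x) ^ 2 / phixx γ t s x + phis γ t s x := by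
  obtain ⟨hts, hsT⟩ := hs
  have hs0 : 0 < s := lt_of_lt_of_le ht hts
  have hE : (0:ℝ) < x + Real.exp 1 := by positivity
  have hL : 1 ≤ Real.log (x + Real.exp 1) := by
    rw [Real.le_log_iff_exp_le hE]; linarith
  have hP : 0 < phi γ t s x := by unfold phi; positivity
  have hsplit : Real.sqrt (2 * s * Real.log (x + Real.exp 1)) =
      Real.sqrt s * Real.sqrt (2 * Real.log (x + Real.exp 1)) := by
    rw [show 2 * s * Real.log (x + Real.exp 1) = s * (2 * Real.log (x + Real.exp 1)) by ring,
      Real.sqrt_mul hs0.le]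
  simp only [phix, phixx, phis, hsplit]
  exact phi_aux γ (phi γ t s x) (x + Real.exp 1) (Real.log (x + Real.exp 1))
    (Real.sqrt (2 * Real.log (x + Real.exp 1))) (Real.sqrt s) hγ hP hE hL
    (Real.sqrt_pos.mpr hs0) (Real.sqrt_le_sqrt (by linarith))
    (Real.sq_sqrt (by linarith))
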